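/- For ρ Hermitian positive definite, s ∈ (0,1], δρ Hermitian, and δω_s the solution of s·δω_s·ρ + ρ·δω_s = δρ, the quantity Tr(δρ·(δω_s + δω_s†)/2) is a nonnegative real number. -/

import Mathlib

open Matrix ComplexOrder

lemma psd_trace_nonneg {n : ℕ} {M : Matrix (Fin n) (Fin n) ℂ}
    (hM : M.PosSemidef) : 0 ≤ M.trace := by
  rw [Matrix.trace]
  apply Finset.sum_nonneg
  intro i _
  exact hM.diag_nonneg

theorem petz_form_nonneg {n : ℕ} (ρ δρ δω : Matrix (Fin n) (Fin n) ℂ)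
    (hρ : ρ.PosDef) (hδρ : δρ.IsHermitian) (s : ℝ) (hs : s ∈ Set.Ioc (0:ℝ) 1)
    (hδω : (s : ℂ) • (δω * ρ) + ρ * δω = δρ) :
    ∃ r : ℝ, 0 ≤ r ∧ (δρ * ((1/2 : ℂ) • (δω + δωᴴ))).trace = (r : ℂ) := by
  set T : ℂ := (δρ * δωᴴ).trace with hT
  have hsplit : δρ * δωᴴ = (s : ℂ) • (δω * ρ * δωᴴ) + ρ * δω * δωᴴ := by
    rw [← hδω]; noncomm_ring
  have ht1 : 0 ≤ (δω * ρ * δωᴴ).trace :=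
    psd_trace_nonneg (hρ.posSemidef.mul_mul_conjTranspose_same δω)
  have ht2 : 0 ≤ (ρ * δω * δωᴴ).trace := by
    rw [Matrix.trace_mul_comm]
    have : δωᴴ * (ρ * δω) = δωᴴ * ρ * δω := by rw [mul_assoc]
    rw [this]
    exact psd_trace_nonneg (hρ.posSemidef.conjTranspose_mul_mul_same δω)
  have hs0 : (0 : ℂ) ≤ (s : ℂ) := by
    rw [Complex.zero_le_real]; exact hs.1.le
  have hTnonneg : 0 ≤ T := by
    rw [hT, hsplit, Matrix.trace_add, Matrix.trace_smul]
    exact add_nonneg (smul_nonneg hs0 ht1) ht2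
  have hTim : T.im = 0 := by
    have := hTnonneg
    rw [Complex.le_def] at this
    simpa using this.2.symm
  have hTre : 0 ≤ T.re := by
    have := hTnonneg
    rw [Complex.le_def] at this
    simpa using this.1
  have hTeq : T = (T.re : ℂ) := by
    apply Complex.ext <;> simp [hTim]
  -- trace(δρ * δω) = star T = T
  have hstar : (δρ * δω).trace = star T := by
    rw [hT, ← Matrix.trace_conjTranspose, Matrix.conjTranspose_mul,
      Matrix.conjTranspose_conjTranspose, hδρ.eq, Matrix.trace_mul_comm]
  have hstarT : star T = T := by
    rw [hTeq]; simp
  refine ⟨T.re, hTre, ?_⟩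
  rw [Matrix.mul_smul, Matrix.trace_smul, Matrix.mul_add, Matrix.trace_add,
    hstar, hstarT, ← hT, ← hTeq]
  rw [smul_eq_mul]; ring
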